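/- For every x ≥ 0, Σ_{k=0}^{∞} ((-x)^k / k!) · Q(k+1, x) = (e^{-x}/2) · (1 + J₀(2x)) - e^{-x} · x · ₁F₂(1/2; 1, 3/2; -x²). -/

import Mathlib

open MeasureTheory Real Filter

/-- The lower incomplete gamma function `γ(n,x) = ∫₀^x t^(n-1) e^(-t) dt`. -/
noncomputable def lowGamma (n x : ℝ) : ℝ := ∫ t in (0:ℝ)..x, t ^ (n - 1) * Real.exp (-t)

/-- The regularized lower incomplete gamma function `P(n,x) = γ(n,x)/Γ(n)`. -/
noncomputable def regP (n x : ℝ) : ℝ := (Real.Gamma n)⁻¹ * lowGamma n x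

/-- The regularized upper incomplete gamma function `Q(n,x) = 1 - P(n,x)`. -/
noncomputable def regQ (n x : ℝ) : ℝ := 1 - regP n x

/-- The Bessel function of the first kind of order 0:
`J₀(z) = Σ_{k=0}^∞ (-1)^k (z/2)^(2k) / (k!)²`. -/
noncomputable def besselJ0 (z : ℝ) : ℝ :=
  ∑' k : ℕ, (-1) ^ k * (z / 2) ^ (2 * k) / (Nat.factorial k : ℝ) ^ 2

/-- The Pochhammer symbol `(x)_k = x (x+1) ⋯ (x+k-1)`. -/
noncomputable def poch (x : ℝ) (k : ℕ) : ℝ := ∏ i ∈ Finset.range k, (x + i)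

/-- The generalized hypergeometric function `₁F₂(a; b, c; z)`. -/
noncomputable def hyp1F2 (a b c z : ℝ) : ℝ :=
  ∑' k : ℕ, poch a k / (poch b k * poch c k) * z ^ k / Nat.factorial k

lemma integ (x : ℝ) (k : ℕ) : ∫ t in (0:ℝ)..x, t ^ k * Real.exp (-t)
    = k.factorial * (1 - Real.exp (-x) * ∑ l ∈ Finset.range (k+1), x ^ l / l.factorial) := by
  induction k with
  | zero =>
      have h : ∀ t ∈ Set.uIcc (0:ℝ) x, HasDerivAt (fun s => -Real.exp (-s)) (Real.exp (-t)) t := by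
        intro t _
        have := ((hasDerivAt_id t).neg.exp).neg
        simp at this; exact this
      have := intervalIntegral.integral_eq_sub_of_hasDerivAt h
        (Continuous.intervalIntegrable (by continuity) _ _)
      simp at this
      simp [this]
  | succ k ih =>
      have hu : ∀ t ∈ Set.uIcc (0:ℝ) x, HasDerivAt (fun s : ℝ => s ^ (k+1))
          (((k:ℝ)+1) * t ^ k) t := by
        intro t _
        simpa using hasDerivAt_pow (k+1) t
      have hv : ∀ t ∈ Set.uIcc (0:ℝ) x, HasDerivAt (fun s => -Real.exp (-s))
          (Real.exp (-t)) t := by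
        intro t _
        have := ((hasDerivAt_id t).neg.exp).neg
        simp at this; exact this
      have hiu : IntervalIntegrable (fun t : ℝ => ((k:ℝ)+1) * t ^ k) volume 0 x :=
        Continuous.intervalIntegrable (by continuity) _ _
      have hiv : IntervalIntegrable (fun t : ℝ => Real.exp (-t)) volume 0 x :=
        Continuous.intervalIntegrable (by continuity) _ _
      have IBP := intervalIntegral.integral_mul_deriv_eq_deriv_mul hu hv hiu hiv
      have h2 : (∫ t in (0:ℝ)..x, ((k:ℝ)+1) * t ^ k * -Real.exp (-t))
          = -(((k:ℝ)+1) * ∫ t in (0:ℝ)..x, t ^ k * Real.exp (-t)) := by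
        rw [← intervalIntegral.integral_const_mul, ← intervalIntegral.integral_neg]
        congr 1; funext t; ring
      rw [IBP, h2, Finset.sum_range_succ (f := fun l => x ^ l / (l.factorial : ℝ)) (n := k+1), ih]
      push_cast [Nat.factorial_succ]
      field_simp
      ring

lemma regQ_eq (x : ℝ) (k : ℕ) : regQ (k + 1) x
    = Real.exp (-x) * ∑ l ∈ Finset.range (k+1), x ^ l / l.factorial := by
  have hexp : ∀ t : ℝ, t ^ ((k:ℝ) + 1 - 1) = t ^ k := by
    intro t; rw [add_sub_cancel_right, Real.rpow_natCast]
  rw [regQ, regP, lowGamma]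
  simp only [hexp]
  rw [integ, Real.Gamma_nat_eq_factorial]
  have hf : (k.factorial : ℝ) ≠ 0 := by positivity
  field_simp
  ring

lemma altsum (n j : ℕ) : ∑ l ∈ Finset.range (j+1), (-1:ℤ)^l * ((n+1).choose l)
    = (-1)^j * (n.choose j) := by
  induction j with
  | zero => simp
  | succ j ih =>
      rw [Finset.sum_range_succ, ih, Nat.choose_succ_succ]
      push_cast
      ring

lemma central (m : ℕ) : (2*(m+1)).choose (m+1) = 2 * (2*m+1).choose (m+1) := by
  have h1 : (2*(m+1)).choose (m+1) = (2*m+1).choose m + (2*m+1).choose (m+1) := by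
    rw [show 2*(m+1) = (2*m+1)+1 by ring]
    exact Nat.choose_succ_succ _ _
  have h2 : (2*m+1).choose m = (2*m+1).choose (m+1) := by
    have := Nat.choose_symm (n := 2*m+1) (k := m+1) (by omega)
    rw [show 2*m+1 - (m+1) = m by omega] at this
    omega
  omega

lemma Sgen (n : ℕ) : ∑ k ∈ Finset.range (n+1), (if n ≤ 2*k then (-1:ℤ)^k * (n.choose k) else 0)
    = (-1)^n * ∑ l ∈ Finset.range (n/2+1), (-1:ℤ)^l * (n.choose l) := by
  rw [← Finset.sum_range_reflect]
  have step1 : ∀ k ∈ Finset.range (n+1),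
      (if n ≤ 2*(n+1-1-k) then (-1:ℤ)^(n+1-1-k) * (n.choose (n+1-1-k)) else 0)
      = (-1)^n * (if 2*k ≤ n then (-1:ℤ)^k * (n.choose k) else 0) := by
    intro k hk
    rw [Finset.mem_range] at hk
    have hk' : k ≤ n := by omega
    have hc : n + 1 - 1 - k = n - k := by omega
    rw [hc]
    have hcond : (n ≤ 2*(n-k)) ↔ (2*k ≤ n) := by omega
    have hch : n.choose (n - k) = n.choose k := Nat.choose_symm hk'
    have hpow : (-1:ℤ)^(n-k) = (-1)^n * (-1)^k := by
      have h3 : (-1:ℤ)^(n+k) = (-1)^(n-k) := by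
        rw [show n + k = (n-k) + 2*k by omega, pow_add, pow_mul]
        simp
      rw [← h3, pow_add]
    rw [if_congr hcond (by rw [hch, hpow]; try ring) rfl, mul_ite, mul_zero]
    split_ifs <;> ring
  rw [Finset.sum_congr rfl step1, ← Finset.mul_sum]
  congr 1
  rw [← Finset.sum_subset (Finset.range_subset_range.mpr (by omega : n/2+1 ≤ n+1))]
  · apply Finset.sum_congr rfl
    intro k hk
    rw [Finset.mem_range] at hk
    rw [if_pos (by omega)]
  · intro k _ hk
    rw [Finset.mem_range, not_lt] at hk
    rw [if_neg (by omega)]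

lemma S_odd (m : ℕ) : ∑ k ∈ Finset.range (2*m+1+1), (if 2*m+1 ≤ 2*k then (-1:ℤ)^k * ((2*m+1).choose k) else 0)
    = -((-1)^m * ((2*m).choose m)) := by
  rw [Sgen, show (2*m+1)/2 = m by omega, altsum]
  rw [show 2*m+1 = 2*m+1 from rfl, pow_succ, pow_mul]
  simp

lemma S_even2 (m : ℕ) : 2 * (∑ k ∈ Finset.range (2*m+1), (if 2*m ≤ 2*k then (-1:ℤ)^k * ((2*m).choose k) else 0))
    = (-1)^m * ((2*m).choose m) + (if m = 0 then 1 else 0) := by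
  rcases m with _ | j
  · simp
  · rw [show 2*(j+1)+1 = 2*(j+1)+1 from rfl, Sgen, show (2*(j+1))/2 = j+1 by omega]
    rw [show 2*(j+1) = (2*j+1)+1 by ring, altsum, if_neg (by omega)]
    have := central j
    rw [show 2*j+1+1 = 2*(j+1) by ring, pow_mul, this]
    push_cast
    ring

noncomputable def myF (x : ℝ) (n : ℕ) : ℝ :=
  ∑ p ∈ Finset.HasAntidiagonal.antidiagonal n,
    (if p.2 ≤ p.1 then (-x) ^ p.1 / p.1.factorial * (x ^ p.2 / p.2.factorial) else 0)

lemma myF_eq (x : ℝ) (n : ℕ) : myF x n = x ^ n / n.factorial *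
    ((∑ k ∈ Finset.range (n+1), (if n ≤ 2*k then (-1:ℤ)^k * (n.choose k) else 0) : ℤ) : ℝ) := by
  rw [myF, Finset.Nat.sum_antidiagonal_eq_sum_range_succ_mk]
  push_cast
  rw [Finset.mul_sum]
  apply Finset.sum_congr rfl
  intro k hk
  rw [Finset.mem_range] at hk
  have hk' : k ≤ n := by omega
  rw [if_congr (show (n - k ≤ k) ↔ (n ≤ 2*k) by omega) rfl rfl, mul_ite, mul_zero]
  split_ifs with h
  · have hc : (n.choose k : ℝ) * k.factorial * (n-k).factorial = n.factorial := by
      exact_mod_cast Nat.choose_mul_factorial_mul_factorial hk'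
    have h2 : x ^ k * x ^ (n-k) = x ^ n := by
      rw [← pow_add]; congr 1; omega
    have hkf : (k.factorial : ℝ) ≠ 0 := by positivity
    have hnkf : ((n-k).factorial : ℝ) ≠ 0 := by positivity
    have hnf : (n.factorial : ℝ) ≠ 0 := by positivity
    have hch : ((n.choose k : ℕ) : ℝ) = (n.factorial : ℝ) / (k.factorial * (n-k).factorial) := by
      rw [eq_div_iff (by positivity)]
      linear_combination hc
    rw [neg_pow, hch, ← h2]
    field_simp
  · rfl

lemma choose_fact (m : ℕ) : ((2*m).choose m : ℝ) * m.factorial * m.factorial = (2*m).factorial := by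
  have := Nat.choose_mul_factorial_mul_factorial (show m ≤ 2*m by omega)
  rw [show 2*m - m = m by omega] at this
  exact_mod_cast this

lemma myF_odd (x : ℝ) (m : ℕ) :
    myF x (2*m+1) = -((-1)^m * x^(2*m+1) / ((2*m+1) * ((m.factorial : ℝ))^2)) := by
  rw [myF_eq, S_odd]
  have hc := choose_fact m
  have hfact : ((2*m+1).factorial : ℝ) = (2*m+1) * (2*m).factorial := by
    exact_mod_cast Nat.factorial_succ (2*m)
  have h1 : ((2*m).factorial : ℝ) ≠ 0 := by positivity
  have h2 : (m.factorial : ℝ) ≠ 0 := by positivity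
  push_cast [hfact]
  field_simp
  linear_combination -x^(2*m+1) * hc

lemma myF_even (x : ℝ) (m : ℕ) :
    myF x (2*m) = (-1)^m * x^(2*m) / ((m.factorial : ℝ)^2 * 2)
      + (if m = 0 then (1:ℝ)/2 else 0) := by
  rw [myF_eq]
  have h := S_even2 m
  have hS : ((∑ k ∈ Finset.range (2*m+1), (if 2*m ≤ 2*k then (-1:ℤ)^k * ((2*m).choose k) else 0) : ℤ) : ℝ)
      = (((-1:ℤ)^m * ((2*m).choose m) + (if m = 0 then 1 else 0) : ℤ) : ℝ) / 2 := by
    rw [← h]; push_cast; ring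
  rw [hS]
  have hc := choose_fact m
  have h1 : ((2*m).factorial : ℝ) ≠ 0 := by positivity
  have h2 : (m.factorial : ℝ) ≠ 0 := by positivity
  push_cast [apply_ite (fun z : ℤ => (z : ℝ))]
  split_ifs with hm
  · subst hm; norm_num
  · rw [add_zero, add_zero]
    field_simp
    linear_combination x^(2*m) * hc

lemma poch_one (k : ℕ) : poch 1 k = k.factorial := by
  induction k with
  | zero => simp [poch]
  | succ k ih =>
      rw [poch, Finset.prod_range_succ, ← poch, ih, Nat.factorial_succ]
      push_cast
      ring

lemma poch_three_half (k : ℕ) : poch (3/2) k = (2*k+1) * poch (1/2) k := by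
  induction k with
  | zero => simp [poch]
  | succ k ih =>
      simp only [poch] at ih ⊢
      rw [Finset.prod_range_succ, Finset.prod_range_succ, ih]
      push_cast
      ring

lemma poch_half_pos (k : ℕ) : 0 < poch (1/2) k := by
  apply Finset.prod_pos
  intro i _
  positivity

lemma hyp_term (x : ℝ) (m : ℕ) :
    poch (1/2) m / (poch 1 m * poch (3/2) m) * (-x^2)^m / m.factorial
      = (-1)^m * x^(2*m) / ((2*m+1) * ((m.factorial : ℝ))^2) := by
  rw [poch_one, poch_three_half]
  have h0 : poch (1/2) m ≠ 0 := ne_of_gt (poch_half_pos m)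
  have hf : (m.factorial : ℝ) ≠ 0 := by positivity
  have hx2 : (-x^2)^m = (-1:ℝ)^m * x^(2*m) := by
    rw [neg_pow, pow_mul]
  rw [hx2]
  have h21 : (2*(m:ℝ)+1) ≠ 0 := by positivity
  field_simp

theorem alternating_generating_function_regQ (x : ℝ) (hx : 0 ≤ x) :
    ∑' k : ℕ, (-x) ^ k / Nat.factorial k * regQ (k + 1) x
      = (Real.exp (-x) / 2) * (1 + besselJ0 (2 * x))
        - Real.exp (-x) * x * hyp1F2 (1 / 2) 1 (3 / 2) (-x ^ 2) := by
  classical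
  have hG : Summable (fun p : ℕ × ℕ => (x ^ p.1 / p.1.factorial) * (x ^ p.2 / p.2.factorial)) :=
    (Real.summable_pow_div_factorial x).mul_of_nonneg (Real.summable_pow_div_factorial x)
      (fun n => by positivity) (fun n => by positivity)
  set F : ℕ × ℕ → ℝ := fun p =>
    if p.2 ≤ p.1 then (-x) ^ p.1 / p.1.factorial * (x ^ p.2 / p.2.factorial) else 0 with hFdef
  have hFzero : ∀ k l : ℕ, ¬ (l ≤ k) → F (k, l) = 0 := by
    intro k l h
    simp only [hFdef]
    exact if_neg h
  have hFval : ∀ k l : ℕ, l ≤ k → F (k, l) = (-x) ^ k / k.factorial * (x ^ l / l.factorial) := by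
    intro k l h
    simp only [hFdef]
    exact if_pos h
  have hF : Summable F := by
    apply Summable.of_norm_bounded hG
    intro p
    simp only [hFdef]
    split_ifs with h
    · rw [Real.norm_eq_abs, abs_mul, abs_div, abs_div, abs_pow, abs_pow, abs_neg,
        abs_of_nonneg hx, Nat.abs_cast, Nat.abs_cast]
    · simp only [norm_zero]
      positivity
  have hfib : ∀ k : ℕ, Summable (fun l => F (k, l)) := by
    intro k
    apply summable_of_ne_finset_zero (s := Finset.range (k+1))
    intro l hl
    rw [Finset.mem_range, not_lt] at hl
    exact hFzero k l (by omega)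
  have hinner : ∀ k : ℕ, ∑' l, F (k, l)
      = (-x) ^ k / k.factorial * ∑ l ∈ Finset.range (k+1), x ^ l / l.factorial := by
    intro k
    rw [tsum_eq_sum (s := Finset.range (k+1))
      (fun l hl => by rw [Finset.mem_range, not_lt] at hl; exact hFzero k l (by omega))]
    rw [Finset.mul_sum]
    exact Finset.sum_congr rfl fun l hl =>
      hFval k l (by rw [Finset.mem_range] at hl; omega)
  have hmyFF : ∀ n : ℕ, myF x n = ∑' c : Finset.HasAntidiagonal.antidiagonal n, F ↑c := by
    intro n
    rw [Finset.tsum_subtype]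
    rfl
  have hσ : Summable (F ∘ (Finset.HasAntidiagonal.sigmaAntidiagonalEquivProd (A := ℕ))) :=
    (Finset.HasAntidiagonal.sigmaAntidiagonalEquivProd.summable_iff).2 hF
  have hmyF : Summable (fun n => myF x n) := by
    have h1 : Summable (fun n : ℕ => ∑' c : Finset.HasAntidiagonal.antidiagonal n,
        (F ∘ (Finset.HasAntidiagonal.sigmaAntidiagonalEquivProd (A := ℕ))) ⟨n, c⟩) := hσ.sigma
    exact h1.congr fun n => (hmyFF n).symm
  have he : Summable (fun m => myF x (2*m)) :=
    hmyF.comp_injective (fun a b h => by omega)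
  have ho : Summable (fun m => myF x (2*m+1)) :=
    hmyF.comp_injective (fun a b h => by omega)
  have hhalf : Summable (fun m : ℕ => if m = 0 then (1:ℝ)/2 else 0) :=
    summable_of_ne_finset_zero (s := {0}) (fun m hm => if_neg (by simpa using hm))
  have hg : Summable (fun m : ℕ => (-1:ℝ)^m * x^(2*m) / ((m.factorial:ℝ)^2*2)) :=
    (he.sub hhalf).congr fun m => by rw [myF_even]; ring
  have h2x : 2*x/2 = x := by ring
  have heven : ∑' m, myF x (2*m) = besselJ0 (2*x) / 2 + 1/2 := by
    calc ∑' m, myF x (2*m)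
        = ∑' m : ℕ, ((-1:ℝ)^m * x^(2*m) / ((m.factorial:ℝ)^2*2)
            + (if m = 0 then (1:ℝ)/2 else 0)) := tsum_congr (myF_even x)
      _ = (∑' m : ℕ, (-1:ℝ)^m * x^(2*m) / ((m.factorial:ℝ)^2*2))
            + ∑' m : ℕ, (if m = 0 then (1:ℝ)/2 else 0) := hg.tsum_add hhalf
      _ = besselJ0 (2*x) / 2 + 1/2 := by
          rw [tsum_ite_eq]
          congr 1
          rw [besselJ0]
          rw [← tsum_div_const]
          exact tsum_congr fun m => by rw [h2x, ← div_div]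
  have hodd : ∑' m, myF x (2*m+1) = -(x * hyp1F2 (1/2) 1 (3/2) (-x^2)) := by
    calc ∑' m, myF x (2*m+1)
        = ∑' m : ℕ, (-x) * (poch (1/2) m / (poch 1 m * poch (3/2) m)
            * (-x^2)^m / m.factorial) :=
          tsum_congr fun m => by rw [myF_odd, hyp_term]; ring
      _ = (-x) * hyp1F2 (1/2) 1 (3/2) (-x^2) := by rw [tsum_mul_left, hyp1F2]
      _ = -(x * hyp1F2 (1/2) 1 (3/2) (-x^2)) := by ring
  calc ∑' k : ℕ, (-x) ^ k / Nat.factorial k * regQ (k + 1) x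
      = ∑' k : ℕ, Real.exp (-x) * ((-x) ^ k / k.factorial
          * ∑ l ∈ Finset.range (k+1), x ^ l / l.factorial) :=
        tsum_congr fun k => by rw [regQ_eq]; ring
    _ = Real.exp (-x) * ∑' k : ℕ, ((-x) ^ k / k.factorial
          * ∑ l ∈ Finset.range (k+1), x ^ l / l.factorial) := tsum_mul_left
    _ = Real.exp (-x) * ∑' n, myF x n := by
        congr 1
        calc ∑' k : ℕ, ((-x) ^ k / k.factorial
              * ∑ l ∈ Finset.range (k+1), x ^ l / l.factorial)
            = ∑' k : ℕ, ∑' l : ℕ, F (k, l) := tsum_congr fun k => (hinner k).symm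
          _ = ∑' p : ℕ × ℕ, F p := (hF.tsum_prod' hfib).symm
          _ = ∑' σ : (Σ n : ℕ, Finset.HasAntidiagonal.antidiagonal n),
                (F ∘ (Finset.HasAntidiagonal.sigmaAntidiagonalEquivProd (A := ℕ))) σ :=
              ((Finset.HasAntidiagonal.sigmaAntidiagonalEquivProd (A := ℕ)).tsum_eq F).symm
          _ = ∑' n, ∑' c : Finset.HasAntidiagonal.antidiagonal n,
                (F ∘ (Finset.HasAntidiagonal.sigmaAntidiagonalEquivProd (A := ℕ))) ⟨n, c⟩ := hσ.tsum_sigma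
          _ = ∑' n, myF x n := tsum_congr fun n => (hmyFF n).symm
    _ = Real.exp (-x) * (∑' m, myF x (2*m) + ∑' m, myF x (2*m+1)) := by
        rw [tsum_even_add_odd he ho]
    _ = (Real.exp (-x) / 2) * (1 + besselJ0 (2 * x))
        - Real.exp (-x) * x * hyp1F2 (1 / 2) 1 (3 / 2) (-x ^ 2) := by
        rw [heven, hodd]
        ring
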